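/- Let ρ satisfy (A3), suppose g satisfies (A4), let 0 < b < 1, and assume g(σ_M) ≤ b (equivalently σ_{b,0} ≤ σ_M, where σ_{b,0} = γ_{b,0} = g⁻¹(b)). Then for every ε ∈ (0, b), c(ε) := ε⁻¹ log(σ_{b,ε}/γ_{b,ε}) satisfies c(ε) ≥ (1−b)/K + b/φ(γ_{b,0}) ≥ 1/K; in particular c_o := inf{c(ε) : 0 < ε < b} ≥ (1−b)/K + b/φ(γ_{b,0}). -/

import Mathlib

open MeasureTheory ProbabilityTheory Filter Set

/-- expression (6.28): Under (A3), (A4) and g(σ_M) ≤ b, for every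
ε ∈ (0, b) one has c(ε) ≥ (1−b)/K + b/φ(γ_{b,0}) ≥ 1/K; in particular
c_o = inf{c(ε) : 0 < ε < b} ≥ (1−b)/K + b/φ(γ_{b,0}). -/
theorem stmt12 (ρ : ℝ → ℝ)
    (hρ_meas : Measurable ρ)
    (hρ_even : ∀ u, ρ (-u) = ρ u)
    (hρ_mono : MonotoneOn ρ (Set.Ici 0))
    (hρ_zero : ρ 0 = 0)
    (hρ_bdd : ∀ u, 0 ≤ ρ u ∧ ρ u ≤ 1)
    (hρ_lim : Tendsto ρ atTop (nhds 1))
    (g : ℝ → ℝ)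
    (hg : ∀ s, 0 < s → g s = ∫ z, ρ (z / s) ∂(gaussianReal 0 1))
    -- Condition (A4):
    (g' : ℝ → ℝ)
    (hg_deriv : ∀ s ∈ Set.Ioi (0 : ℝ), HasDerivAt g (g' s) s)
    (hg'_cont : ContinuousOn g' (Set.Ioi 0))
    (φ : ℝ → ℝ) (hφ : ∀ s, φ s = -s * g' s)
    (hφ_pos : ∀ s ∈ Set.Ioi (0 : ℝ), 0 < φ s)
    (σM : ℝ) (hσM : 0 < σM)
    (hφ_mono : MonotoneOn φ (Set.Ioc 0 σM))
    (hφ_anti : AntitoneOn φ (Set.Ici σM))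
    (K : ℝ) (hK : K = φ σM)
    (b : ℝ) (hb0 : 0 < b) (hb1 : b < 1)
    (hgσM : g σM ≤ b)
    -- σ_{b,ε} and γ_{b,ε} as functions of ε (σ_{b,0} = γ_{b,0} = g⁻¹(b)):
    (σb γb : ℝ → ℝ)
    (hσb : ∀ ε ∈ Set.Ico (0 : ℝ) b, 0 < σb ε ∧ g (σb ε) = (b - ε) / (1 - ε))
    (hγb : ∀ ε ∈ Set.Ico (0 : ℝ) b, 0 < γb ε ∧ g (γb ε) = b / (1 - ε))
    (cfun : ℝ → ℝ)
    (hcfun : ∀ ε ∈ Set.Ioo (0 : ℝ) b, cfun ε = ε⁻¹ * Real.log (σb ε / γb ε)) :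
    (∀ ε ∈ Set.Ioo (0 : ℝ) b, (1 - b) / K + b / φ (γb 0) ≤ cfun ε) ∧
      1 / K ≤ (1 - b) / K + b / φ (γb 0) ∧
      (1 - b) / K + b / φ (γb 0) ≤ sInf (cfun '' Set.Ioo 0 b) := by
  have hKpos : 0 < K := hK ▸ hφ_pos σM hσM
  obtain ⟨hγ0pos, hγ0val⟩ := hγb 0 ⟨le_refl 0, hb0⟩
  have hγ0b : g (γb 0) = b := by rw [hγ0val]; norm_num
  have hφγpos : 0 < φ (γb 0) := hφ_pos (γb 0) hγ0pos
  -- g' < 0 on (0,∞)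
  have hg'neg : ∀ s ∈ Set.Ioi (0 : ℝ), g' s < 0 := by
    intro s hs
    have h1 := hφ_pos s hs
    rw [hφ s] at h1
    have hs0 : (0:ℝ) < s := hs
    nlinarith
  -- g is strictly antitone on (0,∞)
  have hganti : StrictAntiOn g (Set.Ioi 0) := by
    apply strictAntiOn_of_deriv_neg (convex_Ioi 0)
    · exact fun x hx => ((hg_deriv x hx).continuousAt).continuousWithinAt
    · intro x hx
      rw [interior_Ioi] at hx
      rw [(hg_deriv x hx).deriv]
      exact hg'neg x hx
  -- γb 0 ≤ σM
  have hγ0σM : γb 0 ≤ σM := by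
    by_contra h
    push_neg at h
    have := hganti hσM hγ0pos h
    rw [hγ0b] at this
    linarith
  -- φ (γb 0) ≤ K
  have hφγK : φ (γb 0) ≤ K := by
    rw [hK]
    exact hφ_mono ⟨hγ0pos, hγ0σM⟩ ⟨hσM, le_refl σM⟩ hγ0σM
  -- φ s ≤ K everywhere on (0,∞)
  have hφleK : ∀ s, 0 < s → φ s ≤ K := by
    intro s hs
    rcases le_total s σM with h | h
    · rw [hK]; exact hφ_mono ⟨hs, h⟩ ⟨hσM, le_refl σM⟩ h
    · rw [hK]; exact hφ_anti (self_mem_Ici) h h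
  -- key comparison lemma
  have key : ∀ a c C : ℝ, 0 < a → a ≤ c → 0 < C →
      (∀ s, a ≤ s → s ≤ c → φ s ≤ C) →
      (g a - g c) / C ≤ Real.log c - Real.log a := by
    intro a c C ha hac hC hφle
    have hmono : MonotoneOn (fun s => Real.log s + g s / C) (Set.Icc a c) := by
      apply monotoneOn_of_deriv_nonneg (convex_Icc a c)
      · apply ContinuousOn.add
        · exact Real.continuousOn_log.mono
            (fun x hx => ne_of_gt (lt_of_lt_of_le ha hx.1))
        · exact ContinuousOn.div_const
            (fun x hx => ((hg_deriv x (lt_of_lt_of_le ha hx.1)).continuousAt).continuousWithinAt) C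
      · intro x hx
        rw [interior_Icc] at hx
        have hx0 : 0 < x := lt_trans ha hx.1
        exact ((Real.hasDerivAt_log hx0.ne').add
          ((hg_deriv x hx0).div_const C)).differentiableAt.differentiableWithinAt
      · intro x hx
        rw [interior_Icc] at hx
        have hx0 : 0 < x := lt_trans ha hx.1
        rw [(show HasDerivAt (fun s => Real.log s + g s / C) _ x from
          ((Real.hasDerivAt_log hx0.ne').add ((hg_deriv x hx0).div_const C))).deriv]
        have hφx : φ x ≤ C := hφle x hx.1.le hx.2.le
        rw [hφ x] at hφx
        have h1 : 0 ≤ C + x * g' x := by linarith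
        have h2 : x⁻¹ + g' x / C = (C + x * g' x) / (x * C) := by
          field_simp
        rw [h2]
        exact div_nonneg h1 (by positivity)
    have h := hmono (Set.left_mem_Icc.mpr hac) (Set.right_mem_Icc.mpr hac) hac
    simp only at h
    rw [sub_div]
    linarith
  -- the main pointwise bound
  have main : ∀ ε ∈ Set.Ioo (0 : ℝ) b, (1 - b) / K + b / φ (γb 0) ≤ cfun ε := by
    intro ε hε
    obtain ⟨hε0, hεb⟩ := hε
    have hεmem : ε ∈ Set.Ico (0 : ℝ) b := ⟨hε0.le, hεb⟩
    obtain ⟨hσpos, hσval⟩ := hσb ε hεmem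
    obtain ⟨hγpos, hγval⟩ := hγb ε hεmem
    have hε1 : ε < 1 := hεb.trans hb1
    have h1ε : 0 < 1 - ε := by linarith
    -- γb ε < γb 0
    have hgγγ0 : g (γb 0) < g (γb ε) := by
      rw [hγ0b, hγval, lt_div_iff₀ h1ε]; nlinarith
    have hγγ0 : γb ε < γb 0 := by
      by_contra h
      push_neg at h
      rcases eq_or_lt_of_le h with h' | h'
      · rw [h'] at hgγγ0; linarith
      · have := hganti hγ0pos hγpos h'
        linarith
    -- γb 0 < σb ε
    have hgσγ0 : g (σb ε) < g (γb 0) := by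
      rw [hγ0b, hσval, div_lt_iff₀ h1ε]; nlinarith
    have hγ0σ : γb 0 < σb ε := by
      by_contra h
      push_neg at h
      rcases eq_or_lt_of_le h with h' | h'
      · rw [h'] at hgσγ0; linarith
      · have := hganti hσpos hγ0pos h'
        linarith
    -- piece A : on [γb ε, γb 0], φ ≤ φ (γb 0)
    have keyA := key (γb ε) (γb 0) (φ (γb 0)) hγpos hγγ0.le hφγpos
      (fun s hs1 hs2 => hφ_mono ⟨lt_of_lt_of_le hγpos hs1, hs2.trans hγ0σM⟩
        ⟨hγ0pos, hγ0σM⟩ hs2)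
    -- piece B : on [γb 0, σb ε], φ ≤ K
    have keyB := key (γb 0) (σb ε) K hγ0pos hγ0σ.le hKpos
      (fun s hs1 hs2 => hφleK s (lt_of_lt_of_le hγ0pos hs1))
    -- evaluate differences of g
    have hdiffA : g (γb ε) - g (γb 0) = ε * b / (1 - ε) := by
      rw [hγval, hγ0b]; field_simp; ring
    have hdiffB : g (γb 0) - g (σb ε) = ε * (1 - b) / (1 - ε) := by
      rw [hσval, hγ0b]; field_simp; ring
    rw [hdiffA] at keyA
    rw [hdiffB] at keyB
    rw [hcfun ε ⟨hε0, hεb⟩, Real.log_div hσpos.ne' hγpos.ne',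
      inv_mul_eq_div, le_div_iff₀ hε0]
    have e1 : (1 - b) / K * ε ≤ ε * (1 - b) / (1 - ε) / K := by
      rw [div_mul_eq_mul_div, div_div, div_le_div_iff₀ hKpos (by positivity)]
      nlinarith [mul_nonneg (mul_nonneg hε0.le (by linarith : (0:ℝ) ≤ 1 - b)) hKpos.le]
    have e2 : b / φ (γb 0) * ε ≤ ε * b / (1 - ε) / φ (γb 0) := by
      rw [div_mul_eq_mul_div, div_div, div_le_div_iff₀ hφγpos (by positivity)]
      nlinarith [mul_nonneg (mul_nonneg hε0.le hb0.le) hφγpos.le]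
    linarith
  refine ⟨main, ?_, ?_⟩
  · have h1 : b / K ≤ b / φ (γb 0) := by
      rw [div_le_div_iff₀ hKpos hφγpos]
      nlinarith
    have h2 : (1 - b) / K + b / K = 1 / K := by
      rw [← add_div]; ring_nf
    linarith
  · apply le_csInf
    · exact ⟨cfun (b / 2), Set.mem_image_of_mem _ ⟨by linarith, by linarith⟩⟩
    · rintro x ⟨ε, hε, rfl⟩
      exact main ε hε
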